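/- Let H : ℂⁿ → ℂⁿ be a polynomial map and let M(α₁,...,α_s) := ∑_{i=1}^s (JH)(α_i). Suppose for some m ≥ d, the sum of all principal d×d minors of M(α₁,...,α_m) is zero for all α₁, ..., α_m ∈ ℂⁿ. Then for all s ∈ ℕ, all b₁, ..., b_s ∈ ℂ, and all α₁, ..., α_s ∈ ℂⁿ, the sum of all principal d×d minors of ∑_{i=1}^s b_i · (JH)(α_i) is also zero. -/

import Mathlib

open MvPolynomial

/-- The Jacobian matrix of a polynomial map `F : ℂⁿ → ℂᵐ`, evaluated at `α`. -/
noncomputable def jacEval {n m : ℕ} (F : Fin m → MvPolynomial (Fin n) ℂ)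
    (α : Fin n → ℂ) : Matrix (Fin m) (Fin n) ℂ :=
  Matrix.of fun i j => eval α (pderiv j (F i))

/-- The sum of all principal minors of size `d` of an `n × n` matrix. -/
noncomputable def principalMinorSum {n : ℕ} (d : ℕ) (A : Matrix (Fin n) (Fin n) ℂ) : ℂ :=
  ∑ s ∈ Finset.univ.powersetCard d,
    Matrix.det (Matrix.of fun i j : (s : Finset (Fin n)) => A i j)

lemma pms_zero {n : ℕ} (A : Matrix (Fin n) (Fin n) ℂ) : principalMinorSum 0 A = 1 := by
  simp [principalMinorSum, Finset.powersetCard_zero]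

lemma pms_big {n d : ℕ} (hnd : n < d) (A : Matrix (Fin n) (Fin n) ℂ) :
    principalMinorSum d A = 0 := by
  rw [principalMinorSum, Finset.powersetCard_eq_empty.mpr (by simpa using hnd)]
  simp

lemma pms_zero_matrix {n d : ℕ} (hd : 0 < d) :
    principalMinorSum d (0 : Matrix (Fin n) (Fin n) ℂ) = 0 := by
  unfold principalMinorSum
  refine Finset.sum_eq_zero fun S hS => ?_
  have hcard : S.card = d := (Finset.mem_powersetCard.mp hS).2
  have hne : (S : Finset (Fin n)).Nonempty := Finset.card_pos.mp (hcard ▸ hd)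
  have : Nonempty (S : Finset (Fin n)) := hne.to_subtype
  have h0 : (Matrix.of fun i j : (S : Finset (Fin n)) => (0 : Matrix (Fin n) (Fin n) ℂ) i j)
      = (0 : Matrix (S : Finset (Fin n)) (S : Finset (Fin n)) ℂ) := by
    ext i j; simp
  rw [h0]
  exact Matrix.det_zero

lemma pms_smul {n : ℕ} (d : ℕ) (c : ℂ) (A : Matrix (Fin n) (Fin n) ℂ) :
    principalMinorSum d (c • A) = c ^ d * principalMinorSum d A := by
  unfold principalMinorSum
  rw [Finset.mul_sum]
  refine Finset.sum_congr rfl fun S hS => ?_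
  have hcard : Fintype.card (S : Finset (Fin n)) = d := by
    rw [Fintype.card_coe]; exact (Finset.mem_powersetCard.mp hS).2
  have h1 : (Matrix.of fun i j : (S : Finset (Fin n)) => (c • A) i j)
      = c • (Matrix.of fun i j : (S : Finset (Fin n)) => A i j) := by
    ext i j; simp
  rw [h1, Matrix.det_smul, hcard]


noncomputable def pmsPoly (d : ℕ) {n s : ℕ} (A : Fin s → Matrix (Fin n) (Fin n) ℂ) :
    MvPolynomial (Fin s) ℂ :=
  ∑ S ∈ Finset.univ.powersetCard d,
    Matrix.det (Matrix.of fun i j : (S : Finset (Fin n)) => ∑ r, X r * C (A r i j))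

lemma pmsPoly_eval (d : ℕ) {n s : ℕ} (A : Fin s → Matrix (Fin n) (Fin n) ℂ) (b : Fin s → ℂ) :
    eval b (pmsPoly d A) = principalMinorSum d (∑ i, b i • A i) := by
  unfold pmsPoly principalMinorSum
  rw [map_sum]
  refine Finset.sum_congr rfl fun S hS => ?_
  rw [RingHom.map_det]
  congr 1
  ext i j
  simp [Matrix.sum_apply]

lemma pmsPoly_totalDegree (d : ℕ) {n s : ℕ} (A : Fin s → Matrix (Fin n) (Fin n) ℂ) :
    (pmsPoly d A).totalDegree ≤ d := by
  unfold pmsPoly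
  refine (totalDegree_finset_sum _ _).trans (Finset.sup_le fun S hS => ?_)
  have hcard : Fintype.card (S : Finset (Fin n)) = d := by
    rw [Fintype.card_coe]; exact (Finset.mem_powersetCard.mp hS).2
  rw [Matrix.det_apply]
  refine (totalDegree_finset_sum _ _).trans (Finset.sup_le fun σ _ => ?_)
  refine (totalDegree_smul_le _ _).trans ?_
  refine (totalDegree_finset_prod _ _).trans ?_
  calc ∑ i : (S : Finset (Fin n)),
        ((Matrix.of fun i j : (S : Finset (Fin n)) => ∑ r, X r * C (A r i j)) (σ i) i).totalDegree
      ≤ ∑ _i : (S : Finset (Fin n)), 1 := by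
        refine Finset.sum_le_sum fun i _ => ?_
        rw [Matrix.of_apply]
        refine (totalDegree_finset_sum _ _).trans (Finset.sup_le fun r _ => ?_)
        refine (totalDegree_mul _ _).trans ?_
        have h1 : (X r : MvPolynomial (Fin s) ℂ).totalDegree = 1 := totalDegree_X r
        have h2 : (C (A r ((σ i) : Fin n) (i : Fin n)) : MvPolynomial (Fin s) ℂ).totalDegree = 0 :=
          totalDegree_C _
        omega
    _ = d := by
        rw [Finset.sum_const, smul_eq_mul, mul_one, Finset.card_univ, hcard]


lemma pow_succ_sub' {R : Type*} [CommRing R] (x : R) (e : ℕ) :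
    (x + 1) ^ e - x ^ e = ∑ k ∈ Finset.range e, x ^ k * (e.choose k : R) := by
  rw [add_pow, Finset.sum_range_succ]
  simp

lemma eval_bind₁' {s : ℕ} (g : Fin s → ℂ) (f : Fin s → MvPolynomial (Fin s) ℂ)
    (q : MvPolynomial (Fin s) ℂ) :
    eval g (bind₁ f q) = eval (fun i => eval g (f i)) q :=
  eval₂Hom_bind₁ _ _ _ _

lemma polyEval_aeval {s : ℕ} (F : Fin s → Polynomial ℂ) (q : MvPolynomial (Fin s) ℂ) (t : ℂ) :
    Polynomial.eval t (MvPolynomial.aeval F q) = eval (fun i => Polynomial.eval t (F i)) q := by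
  induction q using MvPolynomial.induction_on with
  | C a => simp [Polynomial.algebraMap_eq]
  | add p q hp hq => simp [hp, hq]
  | mul_X p i hp => simp [hp]

lemma shift_monomial_deg {s : ℕ} (i : Fin s) (v : Fin s →₀ ℕ) (c : ℂ) :
    (bind₁ (fun j => if j = i then X j + 1 else X j) (monomial v c)
      - monomial v c).totalDegree ≤ (v.sum fun _ e => e) - 1 := by
  rw [bind₁_monomial]
  by_cases hvi : v i = 0
  · have hprod : ∀ j ∈ v.support,
        ((if j = i then X j + 1 else X j) : MvPolynomial (Fin s) ℂ) ^ v j = X j ^ v j := by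
      intro j hj
      rcases eq_or_ne j i with rfl | hne
      · exact absurd hvi (Finsupp.mem_support_iff.mp hj)
      · simp [hne]
    rw [Finset.prod_congr rfl hprod]
    have : (monomial v c : MvPolynomial (Fin s) ℂ) = C c * ∏ j ∈ v.support, X j ^ v j := by
      rw [monomial_eq]; rfl
    rw [← this, sub_self]
    simp
  · have hi : i ∈ v.support := Finsupp.mem_support_iff.mpr hvi
    rw [← Finset.mul_prod_erase _ _ hi]
    have hrest : ∀ j ∈ v.support.erase i,
        ((if j = i then X j + 1 else X j) : MvPolynomial (Fin s) ℂ) ^ v j = X j ^ v j := by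
      intro j hj
      simp [Finset.ne_of_mem_erase hj]
    rw [Finset.prod_congr rfl hrest, if_pos rfl]
    have hmono : (monomial v c : MvPolynomial (Fin s) ℂ)
        = C c * (X i ^ v i * ∏ j ∈ v.support.erase i, X j ^ v j) := by
      rw [monomial_eq]
      congr 1
      exact (Finset.mul_prod_erase _ _ hi).symm
    rw [hmono]
    have hdiff : C c * ((X i + 1) ^ v i * ∏ j ∈ v.support.erase i, X j ^ v j)
        - C c * (X i ^ v i * ∏ j ∈ v.support.erase i, X j ^ v j)
        = C c * ((∑ k ∈ Finset.range (v i), X i ^ k * ((v i).choose k : MvPolynomial (Fin s) ℂ))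
            * ∏ j ∈ v.support.erase i, X j ^ v j) := by
      rw [← pow_succ_sub' (X i : MvPolynomial (Fin s) ℂ) (v i)]
      ring
    rw [hdiff]
    have hT : ((∑ k ∈ Finset.range (v i), X i ^ k * ((v i).choose k : MvPolynomial (Fin s) ℂ))).totalDegree
        ≤ v i - 1 := by
      refine (totalDegree_finset_sum _ _).trans (Finset.sup_le fun k hk => ?_)
      refine (totalDegree_mul _ _).trans ?_
      have h1 : ((X i : MvPolynomial (Fin s) ℂ) ^ k).totalDegree ≤ k :=
        (totalDegree_pow _ _).trans (by simp)
      have h2 : (((v i).choose k : MvPolynomial (Fin s) ℂ)).totalDegree = 0 := by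
        rw [← map_natCast (C : ℂ →+* MvPolynomial (Fin s) ℂ)]
        exact totalDegree_C _
      have hk' := Finset.mem_range.mp hk
      omega
    have hP : (∏ j ∈ v.support.erase i, (X j : MvPolynomial (Fin s) ℂ) ^ v j).totalDegree
        ≤ ∑ j ∈ v.support.erase i, v j := by
      refine (totalDegree_finset_prod _ _).trans (Finset.sum_le_sum fun j _ => ?_)
      exact (totalDegree_pow _ _).trans (by simp)
    have hsum : (v.sum fun _ e => e) = v i + ∑ j ∈ v.support.erase i, v j := by
      rw [Finsupp.sum]
      exact (Finset.add_sum_erase _ _ hi).symm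
    have := (totalDegree_mul (C c) _).trans
      (add_le_add (le_of_eq (totalDegree_C c)) ((totalDegree_mul _ _).trans (add_le_add hT hP)))
    omega

lemma shift_sub_deg {s : ℕ} (i : Fin s) (q : MvPolynomial (Fin s) ℂ) {D : ℕ}
    (hq : q.totalDegree ≤ D + 1) :
    (bind₁ (fun j => if j = i then X j + 1 else X j) q - q).totalDegree ≤ D := by
  have hq' : bind₁ (fun j => if j = i then X j + 1 else X j) q - q
      = ∑ v ∈ q.support, (bind₁ (fun j => if j = i then X j + 1 else X j)
          (monomial v (coeff v q)) - monomial v (coeff v q)) := by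
    rw [Finset.sum_sub_distrib, ← map_sum, support_sum_monomial_coeff]
  rw [hq']
  refine (totalDegree_finset_sum _ _).trans (Finset.sup_le fun v hv => ?_)
  refine (shift_monomial_deg i v _).trans ?_
  have := le_totalDegree hv
  omega


lemma totalDegree_bind₁_le {s : ℕ} (f : Fin s → MvPolynomial (Fin s) ℂ)
    (hf : ∀ i, (f i).totalDegree ≤ 1) (q : MvPolynomial (Fin s) ℂ) :
    (bind₁ f q).totalDegree ≤ q.totalDegree := by
  have hq' : bind₁ f q = ∑ v ∈ q.support, bind₁ f (monomial v (coeff v q)) := by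
    rw [← map_sum, support_sum_monomial_coeff]
  rw [hq']
  refine (totalDegree_finset_sum _ _).trans (Finset.sup_le fun v hv => ?_)
  rw [bind₁_monomial]
  refine (totalDegree_mul _ _).trans ?_
  have h2 : (∏ j ∈ v.support, f j ^ v j).totalDegree ≤ ∑ j ∈ v.support, v j := by
    refine (totalDegree_finset_prod _ _).trans (Finset.sum_le_sum fun j _ => ?_)
    refine (totalDegree_pow _ _).trans ?_
    calc v j * (f j).totalDegree ≤ v j * 1 := Nat.mul_le_mul_left _ (hf j)
      _ = v j := Nat.mul_one _
  have h3 := le_totalDegree hv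
  have h4 : (v.sum fun _ e => e) = ∑ j ∈ v.support, v j := rfl
  rw [totalDegree_C]
  omega

lemma simplex_vanish : ∀ (D : ℕ) {s : ℕ} (q : MvPolynomial (Fin s) ℂ),
    q.totalDegree ≤ D →
    (∀ k : Fin s → ℕ, (∑ i, k i) ≤ D → eval (fun i => (k i : ℂ)) q = 0) →
    ∀ b : Fin s → ℂ, eval b q = 0 := by
  intro D
  induction D with
  | zero =>
    intro s q hdeg hvan b
    have h0 : q.totalDegree = 0 := Nat.le_zero.mp hdeg
    rw [totalDegree_eq_zero_iff] at h0
    have : eval b q = eval (fun _ : Fin s => ((0 : ℕ) : ℂ)) q := by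
      rw [eval_eq, eval_eq]
      refine Finset.sum_congr rfl fun v hv => ?_
      have hv0 : v.support = ∅ := by
        ext j
        simp [Finsupp.mem_support_iff, h0 v hv j]
      rw [hv0]
      simp
    rw [this]
    simpa using hvan (fun _ => 0) (by simp)
  | succ D IH =>
    intro s q hdeg hvan b
    have key : ∀ (i : Fin s) (c : Fin s → ℂ),
        eval (fun j => if j = i then c j + 1 else c j) q = eval c q := by
      intro i c
      have hdrop := shift_sub_deg i q hdeg
      have hv : ∀ k : Fin s → ℕ, (∑ j, k j) ≤ D →
          eval (fun j => (k j : ℂ))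
            (bind₁ (fun j => if j = i then X j + 1 else X j) q - q) = 0 := by
        intro k hk
        have h1 : (fun j => eval (fun j' => (k j' : ℂ))
              ((fun j => if j = i then X j + 1 else X j) j))
            = fun j => (((if j = i then k j + 1 else k j) : ℕ) : ℂ) := by
          funext j; by_cases hne : j = i <;> simp [hne]
        have hsum : (∑ j, (if j = i then k j + 1 else k j)) = (∑ j, k j) + 1 := by
          have : ∀ j ∈ Finset.univ, (if j = i then k j + 1 else k j)
              = k j + (if j = i then 1 else 0) := by
            intro j _; split <;> simp
          rw [Finset.sum_congr rfl this, Finset.sum_add_distrib]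
          simp
        have e1 : eval (fun j => (((if j = i then k j + 1 else k j) : ℕ) : ℂ)) q = 0 := by
          refine hvan _ ?_
          show (∑ j, if j = i then k j + 1 else k j) ≤ D + 1
          omega
        have e2 := hvan k (hk.trans (Nat.le_succ D))
        rw [map_sub, eval_bind₁', h1, e1, e2, sub_zero]
      have hall := IH _ hdrop hv c
      have h1' : (fun j => eval c ((fun j => if j = i then X j + 1 else X j) j))
          = fun j => if j = i then c j + 1 else c j := by
        funext j; by_cases hne : j = i <;> simp [hne]
      rw [map_sub, eval_bind₁', h1', sub_eq_zero] at hall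
      exact hall
    have main : ∀ (j : ℕ) (c : Fin s → ℂ),
        (∀ i : Fin s, j ≤ (i : ℕ) → c i = 0) → eval c q = 0 := by
      intro j
      induction j with
      | zero =>
        intro c hc
        have hc0 : c = fun _ : Fin s => ((0 : ℕ) : ℂ) :=
          funext fun i => by simpa using hc i (Nat.zero_le _)
        rw [hc0]
        exact hvan (fun _ => 0) (by simp)
      | succ j IHj =>
        intro c hc
        by_cases hjs : j < s
        · set i₀ : Fin s := ⟨j, hjs⟩ with hi₀
          have hnat : ∀ N : ℕ, eval (fun l => if l = i₀ then (N : ℂ) else c l) q = 0 := by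
            intro N
            induction N with
            | zero =>
              apply IHj
              intro i hi
              by_cases hne : i = i₀
              · simp [hne]
              · have hij : (i : ℕ) ≠ j := fun hh => hne (Fin.ext (by simp [hi₀, hh]))
                have hj1 : j + 1 ≤ (i : ℕ) := by omega
                simp [hne, hc i hj1]
            | succ N IHN =>
              have hk := key i₀ (fun l => if l = i₀ then (N : ℂ) else c l)
              have harg : (fun l => if l = i₀ then
                    (if l = i₀ then (N : ℂ) else c l) + 1 else (if l = i₀ then (N : ℂ) else c l))
                  = fun l => if l = i₀ then (((N + 1 : ℕ)) : ℂ) else c l := by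
                funext l; by_cases hne : l = i₀ <;> simp [hne]
              rw [harg] at hk
              rw [hk, IHN]
          set ψ : Polynomial ℂ :=
            MvPolynomial.aeval (fun l => if l = i₀ then Polynomial.X else Polynomial.C (c l)) q
            with hψ
          have hψeval : ∀ t : ℂ, ψ.eval t = eval (fun l => if l = i₀ then t else c l) q := by
            intro t
            have hfun : (fun l => Polynomial.eval t
                  (if l = i₀ then Polynomial.X else Polynomial.C (c l)))
                = fun l => if l = i₀ then t else c l := by
              funext l; by_cases hne : l = i₀ <;> simp [hne]
            rw [hψ, polyEval_aeval, hfun]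
          have hψ0 : ψ = 0 := by
            apply Polynomial.eq_zero_of_infinite_isRoot
            have hsub : Set.range (Nat.cast : ℕ → ℂ) ⊆ {x | ψ.IsRoot x} := by
              rintro _ ⟨N, rfl⟩
              exact (hψeval _).trans (hnat N)
            exact Set.Infinite.mono hsub (Set.infinite_range_of_injective Nat.cast_injective)
          have hbq := hψeval (c i₀)
          have hfun2 : (fun l => if l = i₀ then c i₀ else c l) = c := by
            funext l; by_cases hne : l = i₀ <;> simp [hne]
          rw [hfun2, hψ0] at hbq
          simpa using hbq.symm
        · exact IHj c fun i hi => hc i (by omega)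
    exact main s b fun i hi => absurd i.isLt (by omega)

theorem stmt_16 (n d m : ℕ) (hmd : m ≥ d) (H : Fin n → MvPolynomial (Fin n) ℂ)
    (h : ∀ α : Fin m → Fin n → ℂ, principalMinorSum d (∑ i, jacEval H (α i)) = 0) :
    ∀ (s : ℕ) (b : Fin s → ℂ) (α : Fin s → Fin n → ℂ),
      principalMinorSum d (∑ i, b i • jacEval H (α i)) = 0 := by
  intro s b α
  -- dispatch d = 0
  rcases Nat.eq_zero_or_pos d with rfl | hd
  · have h0 := h (fun _ _ => 0)
    rw [pms_zero] at h0
    exact absurd h0 one_ne_zero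
  -- dispatch n < d
  by_cases hnd : n < d
  · exact pms_big hnd _
  push_neg at hnd
  set A : Fin s → Matrix (Fin n) (Fin n) ℂ := fun i => jacEval H (α i) with hA
  -- dispatch s = 0
  rcases Nat.eq_zero_or_pos s with rfl | hs
  · rw [Finset.univ_eq_empty, Finset.sum_empty]
    exact pms_zero_matrix hd
  -- integer points on the hyperplane
  have hint : ∀ k : Fin s → ℕ, (∑ i, k i) = m →
      principalMinorSum d (∑ i, (k i : ℂ) • A i) = 0 := by
    intro k hk
    have hcard : Fintype.card (Σ i : Fin s, Fin (k i)) = m := by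
      simp [Fintype.card_sigma, hk]
    let e := Fintype.equivFinOfCardEq hcard
    have h0 := h (fun j => α (e.symm j).1)
    have hs1 : ∑ j : Fin m, jacEval H (α ((e.symm j).1)) = ∑ i, (k i : ℂ) • A i := by
      have h2 : ∑ j : Fin m, jacEval H (α ((e.symm j).1))
          = ∑ p : (Σ i : Fin s, Fin (k i)), jacEval H (α p.1) := by
        rw [← Equiv.sum_comp e (fun j => jacEval H (α ((e.symm j).1)))]
        simp
      rw [h2, ← Finset.univ_sigma_univ, Finset.sum_sigma]
      refine Finset.sum_congr rfl fun i _ => ?_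
      simp [Finset.sum_const, Finset.card_univ, hA, Nat.cast_smul_eq_nsmul]
    rw [hs1] at h0
    exact h0
  set i₀ : Fin s := ⟨0, hs⟩ with hi₀
  set σ0 : Fin s → MvPolynomial (Fin s) ℂ :=
    fun i => if i = i₀ then (C (m : ℂ) - ∑ j ∈ Finset.univ.erase i₀, X j) else X i with hσ0
  have hσ0deg : ∀ i, (σ0 i).totalDegree ≤ 1 := by
    intro i
    rw [hσ0]
    by_cases hne : i = i₀
    · simp only [hne, if_pos rfl]
      refine (totalDegree_sub _ _).trans ?_
      have h1 : (C ((m : ℕ) : ℂ) : MvPolynomial (Fin s) ℂ).totalDegree = 0 := totalDegree_C _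
      have h2 : (∑ j ∈ Finset.univ.erase i₀, (X j : MvPolynomial (Fin s) ℂ)).totalDegree ≤ 1 :=
        (totalDegree_finset_sum _ _).trans (Finset.sup_le fun j _ => le_of_eq (totalDegree_X j))
      omega
    · simp [hne]
  -- the substituted polynomial vanishes on the small simplex
  have hQ'van : ∀ k : Fin s → ℕ, (∑ i, k i) ≤ d →
      eval (fun i => (k i : ℂ)) (bind₁ σ0 (pmsPoly d A)) = 0 := by
    intro k hk
    rw [eval_bind₁']
    have hB : (∑ j ∈ Finset.univ.erase i₀, k j) ≤ m :=
      le_trans (Finset.sum_le_sum_of_subset (Finset.erase_subset _ _)) (by omega)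
    set k' : Fin s → ℕ :=
      fun i => if i = i₀ then m - ∑ j ∈ Finset.univ.erase i₀, k j else k i with hk'
    have hcast : (fun i => eval (fun i => (k i : ℂ)) (σ0 i)) = fun i => (k' i : ℂ) := by
      funext i
      by_cases hne : i = i₀
      · simp only [hσ0, hk', hne, if_pos rfl]
        rw [Nat.cast_sub hB]
        push_cast
        simp
      · simp [hσ0, hk', hne]
    rw [hcast, pmsPoly_eval]
    apply hint
    rw [← Finset.add_sum_erase _ _ (Finset.mem_univ i₀)]
    have hrest : ∀ j ∈ Finset.univ.erase i₀, k' j = k j := by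
      intro j hj
      simp [hk', Finset.ne_of_mem_erase hj]
    rw [Finset.sum_congr rfl hrest]
    have hfix : k' i₀ = m - ∑ j ∈ Finset.univ.erase i₀, k j := if_pos rfl
    have heta : (Finset.univ.erase i₀).sum k = ∑ j ∈ Finset.univ.erase i₀, k j := rfl
    omega
  have hQ'deg : (bind₁ σ0 (pmsPoly d A)).totalDegree ≤ d :=
    (totalDegree_bind₁_le σ0 hσ0deg _).trans (pmsPoly_totalDegree d A)
  have hvanQ' := simplex_vanish d _ hQ'deg hQ'van
  -- every complex point on the hyperplane
  have hyper : ∀ x : Fin s → ℂ, (∑ i, x i) = m →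
      principalMinorSum d (∑ i, x i • A i) = 0 := by
    intro x hx
    have h0 := hvanQ' x
    rw [eval_bind₁'] at h0
    have hcast : (fun i => eval x (σ0 i)) = x := by
      funext i
      by_cases hne : i = i₀
      · simp only [hσ0, hne, if_pos rfl]
        simp only [map_sub, eval_C, map_sum, eval_X]
        rw [← hx, ← Finset.add_sum_erase _ _ (Finset.mem_univ i₀)]
        ring
      · simp [hσ0, hne]
    rw [hcast, pmsPoly_eval] at h0
    exact h0
  -- scaling off the hyperplane
  have hscale : ∀ x : Fin s → ℂ, (∑ i, x i) ≠ 0 →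
      principalMinorSum d (∑ i, x i • A i) = 0 := by
    intro x hx
    have hm0 : ((m : ℂ)) ≠ 0 := Nat.cast_ne_zero.mpr (by omega)
    set c : ℂ := (m : ℂ) / (∑ i, x i) with hc
    have hc0 : c ≠ 0 := div_ne_zero hm0 hx
    have h1 : ∑ i, (c * x i) • A i = c • ∑ i, x i • A i := by
      rw [Finset.smul_sum]
      exact Finset.sum_congr rfl fun i _ => (smul_smul c (x i) (A i)).symm
    have h2 := hyper (fun i => c * x i) (by rw [← Finset.mul_sum, hc]; field_simp)
    rw [h1, pms_smul] at h2
    rcases mul_eq_zero.mp h2 with h3 | h3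
    · exact absurd h3 (pow_ne_zero d hc0)
    · exact h3
  by_cases hb : (∑ i, b i) ≠ 0
  · exact hscale b hb
  push_neg at hb
  -- line trick : t ↦ f (b + t • 1)
  set ψ : Polynomial ℂ :=
    MvPolynomial.aeval (fun i => Polynomial.C (b i) + Polynomial.X) (pmsPoly d A) with hψ
  have hψeval : ∀ t : ℂ, ψ.eval t = principalMinorSum d (∑ i, (b i + t) • A i) := by
    intro t
    rw [hψ, polyEval_aeval]
    have hfun : (fun i => Polynomial.eval t (Polynomial.C (b i) + Polynomial.X))
        = fun i => b i + t := by
      funext i; simp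
    rw [hfun, pmsPoly_eval]
  have hψ0 : ψ = 0 := by
    apply Polynomial.eq_zero_of_infinite_isRoot
    have hsub : {t : ℂ | t ≠ 0} ⊆ {x | ψ.IsRoot x} := by
      intro t ht
      show ψ.eval t = 0
      rw [hψeval]
      apply hscale
      rw [Finset.sum_add_distrib, hb, Finset.sum_const, Finset.card_univ, Fintype.card_fin]
      rw [zero_add]
      simp only [nsmul_eq_mul]
      exact mul_ne_zero (Nat.cast_ne_zero.mpr (by omega)) ht
    refine Set.Infinite.mono hsub ?_
    have : ({t : ℂ | t ≠ 0}) = ({0} : Set ℂ)ᶜ := by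
      ext t; simp
    rw [this]
    exact Set.Finite.infinite_compl (Set.finite_singleton 0)
  have hfin := hψeval 0
  rw [hψ0] at hfin
  simp only [Polynomial.eval_zero, add_zero] at hfin
  exact hfin.symm
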